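/- For every formula φ of the modal logic PAML(□) (modal operators □, ◇ plus quantifier-free Presburger constraints on places as atoms), the set of markings in ℕⁿ satisfying φ in the unlabelled transition graph of a Petri net with n places is semilinear: the satisfaction set of □ψ equals ℕⁿ \ pre(ℕⁿ \ X_ψ), of ◇ψ equals pre(X_ψ), Boolean connectives correspond to Boolean set operations, and atomic Presburger formulas define semilinear sets. -/

import Mathlib

structure PetriNet (P T : Type) where
  pre : P → T → ℕ
  post : T → P → ℕ
  M0 : P → ℕ

namespace PetriNet

variable {P T : Type}

/-- Transition `t` is enabled at marking `M`. -/
def enabled (N : PetriNet P T) (t : T) (M : P → ℕ) : Prop :=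
  ∀ p, N.pre p t ≤ M p

/-- `M [t⟩ M'`: firing transition `t` at `M` yields `M'`. -/
def fires (N : PetriNet P T) (t : T) (M M' : P → ℕ) : Prop :=
  N.enabled t M ∧ ∀ p, M' p = M p + N.post t p - N.pre p t

/-- One-step relation `M → M'`. -/
def step (N : PetriNet P T) (M M' : P → ℕ) : Prop := ∃ t, N.fires t M M'

/-- Reachability `M →* M'`: reflexive-transitive closure of `step`. -/
def reach (N : PetriNet P T) : (P → ℕ) → (P → ℕ) → Prop :=
  Relation.ReflTransGen N.step

/-- The reachability set of `N`. -/
def Reach (N : PetriNet P T) : Set (P → ℕ) := {M | N.reach N.M0 M}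

end PetriNet

/-- A linear subset: base vector plus ℕ-linear combinations of finitely many periods. -/
def LinearSet {M : Type*} [AddCommMonoid M] (E : Set M) : Prop :=
  ∃ (x : M) (m : ℕ) (y : Fin m → M),
    E = {v | ∃ k : Fin m → ℕ, v = x + ∑ i, k i • y i}

/-- A semilinear subset: finite union of linear sets. -/
def SemilinearSet {M : Type*} [AddCommMonoid M] (E : Set M) : Prop :=
  ∃ (m : ℕ) (L : Fin m → Set M), (∀ i, LinearSet (L i)) ∧ E = ⋃ i, L i

/-- Quantifier-free Presburger constraints over n place counts. -/
inductive PAtom (n : ℕ) where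
  | top : PAtom n
  | le : (Fin n → ℤ) → ℤ → PAtom n
  | ge : (Fin n → ℤ) → ℤ → PAtom n
  | mod : (Fin n → ℤ) → ℕ → ℕ → PAtom n
  | and : PAtom n → PAtom n → PAtom n
  | neg : PAtom n → PAtom n

def PAtom.sat {n : ℕ} (M : Fin n → ℕ) : PAtom n → Prop
  | .top => True
  | .le a k => (∑ i, a i * (M i : ℤ)) ≤ k
  | .ge a k => k ≤ ∑ i, a i * (M i : ℤ)
  | .mod a c k => Int.ModEq (c : ℤ) (∑ i, a i * (M i : ℤ)) (k : ℤ)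
  | .and φ ψ => PAtom.sat M φ ∧ PAtom.sat M ψ
  | .neg φ => ¬ PAtom.sat M φ

/-- Formulas of PAML(□): Presburger atoms, ¬, ∧, □, ◇. -/
inductive PAML (n : ℕ) where
  | atom : PAtom n → PAML n
  | neg : PAML n → PAML n
  | and : PAML n → PAML n → PAML n
  | box : PAML n → PAML n
  | dia : PAML n → PAML n

/-- Kripke semantics of PAML(□) over the unlabelled transition graph (ℕⁿ, →). -/
def PAML.sat {n : ℕ} {T : Type} (N : PetriNet (Fin n) T) :
    (Fin n → ℕ) → PAML n → Prop
  | M, .atom a => PAtom.sat M a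
  | M, .neg φ => ¬ PAML.sat N M φ
  | M, .and φ ψ => PAML.sat N M φ ∧ PAML.sat N M ψ
  | M, .box φ => ∀ M', N.step M M' → PAML.sat N M' φ
  | M, .dia φ => ∃ M', N.step M M' ∧ PAML.sat N M' φ

/-- pre(X): the set of markings having a one-step successor in X. -/
def preSet {P T : Type} (N : PetriNet P T) (X : Set (P → ℕ)) : Set (P → ℕ) :=
  {M | ∃ M' ∈ X, N.step M M'}

section Basic


variable {μ : Type*} [AddCommMonoid μ]

lemma LinearSet.semilinear {E : Set μ} (h : LinearSet E) : SemilinearSet E :=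
  ⟨1, fun _ => E, fun _ => h, (Set.iUnion_const E).symm⟩

lemma semilinear_empty : SemilinearSet (∅ : Set μ) :=
  ⟨0, fun i => i.elim0, fun i => i.elim0, by simp⟩

lemma semilinear_union {E F : Set μ} (hE : SemilinearSet E) (hF : SemilinearSet F) :
    SemilinearSet (E ∪ F) := by
  obtain ⟨a, L, hL, rfl⟩ := hE
  obtain ⟨b, K, hK, rfl⟩ := hF
  refine ⟨a + b, Fin.append L K, ?_, ?_⟩
  · exact Fin.addCases (fun j => by rw [Fin.append_left]; exact hL j)
      (fun j => by rw [Fin.append_right]; exact hK j)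
  · symm
    ext x
    simp only [Set.mem_iUnion, Set.mem_union]
    constructor
    · rintro ⟨i, hi⟩
      revert hi
      refine Fin.addCases (motive := fun i => x ∈ Fin.append L K i →
        (∃ i, x ∈ L i) ∨ ∃ i, x ∈ K i) ?_ ?_ i
      · intro j hj; rw [Fin.append_left] at hj; exact Or.inl ⟨j, hj⟩
      · intro j hj; rw [Fin.append_right] at hj; exact Or.inr ⟨j, hj⟩
    · rintro (⟨i, hi⟩ | ⟨i, hi⟩)
      · exact ⟨Fin.castAdd b i, by rwa [Fin.append_left]⟩
      · exact ⟨Fin.natAdd a i, by rwa [Fin.append_right]⟩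

lemma semilinear_biUnion {ι : Type*} (s : Finset ι) (f : ι → Set μ)
    (h : ∀ i ∈ s, SemilinearSet (f i)) : SemilinearSet (⋃ i ∈ s, f i) := by
  classical
  induction s using Finset.induction with
  | empty => simpa using semilinear_empty
  | @insert a s ha ih =>
    rw [Finset.set_biUnion_insert]
    exact semilinear_union (h a (Finset.mem_insert_self a s))
      (ih fun i hi => h i (Finset.mem_insert_of_mem hi))

lemma semilinear_iUnion {ι : Type*} [Fintype ι] (f : ι → Set μ)
    (h : ∀ i, SemilinearSet (f i)) : SemilinearSet (⋃ i, f i) := by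
  have := semilinear_biUnion Finset.univ f (fun i _ => h i)
  simpa using this

end Basic

section Dickson

lemma exists_minimal_le {m : ℕ} (S : Set (Fin m → ℕ)) (s : Fin m → ℕ) (hs : s ∈ S) :
    ∃ f ∈ S, f ≤ s ∧ ∀ g ∈ S, g ≤ f → g = f := by
  suffices H : ∀ (N : ℕ) (s : Fin m → ℕ), s ∈ S → (∑ i, s i) = N →
      ∃ f ∈ S, f ≤ s ∧ ∀ g ∈ S, g ≤ f → g = f from H _ s hs rfl
  intro N
  induction N using Nat.strong_induction_on with
  | _ N ih =>
    intro s hs hN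
    by_cases h : ∀ g ∈ S, g ≤ s → g = s
    · exact ⟨s, hs, le_refl s, h⟩
    · push_neg at h
      obtain ⟨g, hgS, hgs, hne⟩ := h
      have hlt : ∑ i, g i < N := by
        rw [← hN]
        obtain ⟨i, hi⟩ : ∃ i, g i ≠ s i := by
          by_contra hc; push_neg at hc; exact hne (funext hc)
        exact Finset.sum_lt_sum (fun j _ => hgs j)
          ⟨i, Finset.mem_univ i, lt_of_le_of_ne (hgs i) hi⟩
      obtain ⟨f, hf, hfs, hmin⟩ := ih _ hlt g hgS rfl
      exact ⟨f, hf, le_trans hfs hgs, hmin⟩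

lemma minimals_finite {m : ℕ} (S : Set (Fin m → ℕ)) :
    Set.Finite {f | f ∈ S ∧ ∀ g ∈ S, g ≤ f → g = f} := by
  have hA : IsAntichain (· ≤ ·) {f | f ∈ S ∧ ∀ g ∈ S, g ≤ f → g = f} := by
    intro a ha b hb hne hle
    exact hne (hb.2 a ha.1 hle)
  have inst : ∀ i : Fin m, IsWellOrder ((fun _ : Fin m => ℕ) i) (· < ·) := by
    intro i
    show IsWellOrder ℕ (· < ·)
    infer_instance
  have h : Set.IsPWO {f | f ∈ S ∧ ∀ g ∈ S, g ≤ f → g = f} :=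
    Set.isPWO_of_wellQuasiOrderedLE _
  exact hA.finite_of_partiallyWellOrderedOn h

lemma enum_of_finite {α : Type*} {S : Set α} (h : S.Finite) :
    ∃ (N : ℕ) (y : Fin N → α), (∀ i, y i ∈ S) ∧ ∀ a ∈ S, ∃ i, y i = a := by
  classical
  refine ⟨h.toFinset.card, fun i => (h.toFinset.equivFin.symm i : α), fun i => ?_, fun a ha => ?_⟩
  · exact h.mem_toFinset.mp (h.toFinset.equivFin.symm i).2
  · exact ⟨h.toFinset.equivFin ⟨a, h.mem_toFinset.mpr ha⟩, by simp⟩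

end Dickson


section Fiber

lemma fiber_semilinear {m : ℕ} {G : Type*} [AddCommGroup G] (L : (Fin m → ℕ) →+ G) (c : G) :
    SemilinearSet {k : Fin m → ℕ | L k = c} := by
  classical
  have hsub : ∀ a b : Fin m → ℕ, a ≤ b → L (b - a) = L b - L a := by
    intro a b hab
    have h1 : a + (b - a) = b := funext fun i => Nat.add_sub_cancel' (hab i)
    have h2 := map_add L a (b - a)
    rw [h1] at h2
    rw [h2]; abel
  set H : Set (Fin m → ℕ) := {h | L h = 0 ∧ h ≠ 0} with hHdef
  obtain ⟨N1, y, hy1, hy2⟩ := enum_of_finite (minimals_finite H)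
  have hyH : ∀ i, L (y i) = 0 := fun i => ((hy1 i).1).1
  -- every homogeneous solution is an ℕ-combination of the y i
  have span : ∀ (Nval : ℕ) (w : Fin m → ℕ), L w = 0 → (∑ i, w i) = Nval →
      ∃ k : Fin N1 → ℕ, w = ∑ i, k i • y i := by
    intro Nval
    induction Nval using Nat.strong_induction_on with
    | _ Nval ih =>
      intro w hh hsum
      by_cases h0 : w = 0
      · exact ⟨0, by simp [h0]⟩
      · obtain ⟨f, hfH, hfle, hfmin⟩ := exists_minimal_le H w ⟨hh, h0⟩
        obtain ⟨i0, hi0⟩ := hy2 f ⟨hfH, hfmin⟩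
        have hrec : L (w - f) = 0 := by rw [hsub f w hfle, hh, hfH.1, sub_zero]
        have hsumsplit : (∑ i, (w - f) i) + (∑ i, f i) = ∑ i, w i := by
          rw [← Finset.sum_add_distrib]
          exact Finset.sum_congr rfl fun i _ => by
            have h2 : f i ≤ w i := hfle i
            simp only [Pi.sub_apply]
            omega
        have hfpos : 0 < ∑ i, f i := by
          by_contra hc
          push_neg at hc
          have : ∀ i ∈ Finset.univ, f i = 0 :=
            Finset.sum_eq_zero_iff.mp (Nat.le_zero.mp hc)
          exact hfH.2 (funext fun i => this i (Finset.mem_univ i))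
        have hlt : (∑ i, (w - f) i) < Nval := by rw [← hsum, ← hsumsplit]; omega
        obtain ⟨k, hk⟩ := ih _ hlt (w - f) hrec rfl
        refine ⟨(fun i => k i + if i = i0 then 1 else 0), ?_⟩
        have hsplit : w = f + (w - f) := (funext fun i => Nat.add_sub_cancel' (hfle i)).symm
        have hsum2 : ∑ i, (k i + if i = i0 then 1 else 0) • y i
            = (∑ i, k i • y i) + y i0 := by
          have e1 : ∀ i ∈ Finset.univ, (k i + if i = i0 then 1 else 0) • y i
              = k i • y i + (if i = i0 then y i else 0) := by
            intro i _
            rw [add_nsmul]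
            congr 1
            split_ifs <;> simp
          rw [Finset.sum_congr rfl e1, Finset.sum_add_distrib]
          congr 1
          simp [Finset.sum_ite_eq']
        rw [hsplit, hk, hsum2, ← hi0]
        abel
  -- minimal inhomogeneous solutions
  obtain ⟨N2, x, hx1, hx2⟩ := enum_of_finite (minimals_finite {k | L k = c})
  refine ⟨N2, fun j => {v | ∃ k : Fin N1 → ℕ, v = x j + ∑ i, k i • y i},
    fun j => ⟨x j, N1, y, rfl⟩, ?_⟩
  ext v
  simp only [Set.mem_setOf_eq, Set.mem_iUnion]
  constructor
  · intro hv
    obtain ⟨f, hfS, hfle, hfmin⟩ := exists_minimal_le {k | L k = c} v hv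
    obtain ⟨j, hj⟩ := hx2 f ⟨hfS, hfmin⟩
    have h0 : L (v - f) = 0 := by rw [hsub f v hfle, hv, hfS, sub_self]
    obtain ⟨k, hk⟩ := span _ (v - f) h0 rfl
    refine ⟨j, k, ?_⟩
    rw [hj, ← hk]
    exact (funext fun i => Nat.add_sub_cancel' (hfle i)).symm
  · rintro ⟨j, k, rfl⟩
    show L _ = c
    rw [map_add, map_sum]
    have hz : ∀ i ∈ Finset.univ, L (k i • y i) = 0 := fun i _ => by
      rw [map_nsmul, hyH i, smul_zero]
    rw [Finset.sum_congr rfl hz]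
    have hxj : L (x j) = c := (hx1 j).1
    simp [hxj]

end Fiber


section Homs

lemma linear_image {μ ν : Type*} [AddCommMonoid μ] [AddCommMonoid ν] (φ : μ →+ ν)
    {E : Set μ} (h : LinearSet E) : LinearSet (φ '' E) := by
  obtain ⟨x, m, y, rfl⟩ := h
  refine ⟨φ x, m, fun i => φ (y i), ?_⟩
  ext w
  simp only [Set.mem_image, Set.mem_setOf_eq]
  constructor
  · rintro ⟨v, ⟨k, rfl⟩, rfl⟩
    exact ⟨k, by rw [map_add, map_sum]; simp [map_nsmul]⟩
  · rintro ⟨k, rfl⟩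
    exact ⟨x + ∑ i, k i • y i, ⟨k, rfl⟩, by rw [map_add, map_sum]; simp [map_nsmul]⟩

lemma semilinear_image {μ ν : Type*} [AddCommMonoid μ] [AddCommMonoid ν] (φ : μ →+ ν)
    {E : Set μ} (h : SemilinearSet E) : SemilinearSet (φ '' E) := by
  obtain ⟨m, L, hL, rfl⟩ := h
  exact ⟨m, fun i => φ '' L i, fun i => linear_image φ (hL i), by rw [Set.image_iUnion]⟩

/-- Restriction to the first block of coordinates, as an additive hom. -/
def splitL (a b : ℕ) : (Fin (a + b) → ℕ) →+ (Fin a → ℕ) where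
  toFun u := u ∘ Fin.castAdd b
  map_zero' := rfl
  map_add' _ _ := rfl

def splitR (a b : ℕ) : (Fin (a + b) → ℕ) →+ (Fin b → ℕ) where
  toFun u := u ∘ Fin.natAdd a
  map_zero' := rfl
  map_add' _ _ := rfl

lemma splitL_append {a b : ℕ} (v : Fin a → ℕ) (w : Fin b → ℕ) :
    splitL a b (Fin.append v w) = v :=
  funext fun i => Fin.append_left v w i

lemma splitR_append {a b : ℕ} (v : Fin a → ℕ) (w : Fin b → ℕ) :
    splitR a b (Fin.append v w) = w :=
  funext fun i => Fin.append_right v w i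

/-- Main tool: sets defined by slack variables and a linear equation are semilinear. -/
lemma slack_semilinear {n m : ℕ} {G : Type*} [AddCommGroup G]
    (φ : (Fin n → ℕ) →+ G) (ψ : (Fin m → ℕ) →+ G) (c : G) :
    SemilinearSet {v : Fin n → ℕ | ∃ w : Fin m → ℕ, φ v + ψ w = c} := by
  have key : {v : Fin n → ℕ | ∃ w : Fin m → ℕ, φ v + ψ w = c}
      = (splitL n m) '' {u | (φ.comp (splitL n m) + ψ.comp (splitR n m)) u = c} := by
    ext v
    simp only [Set.mem_setOf_eq, Set.mem_image, AddMonoidHom.add_apply,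
      AddMonoidHom.coe_comp, Function.comp_apply]
    constructor
    · rintro ⟨w, hw⟩
      exact ⟨Fin.append v w, by rw [splitL_append, splitR_append]; exact hw, splitL_append v w⟩
    · rintro ⟨u, hu, rfl⟩
      exact ⟨splitR n m u, hu⟩
  rw [key]
  exact semilinear_image _ (fiber_semilinear _ c)

lemma slack2_semilinear {n m1 m2 : ℕ} {G : Type*} [AddCommGroup G]
    (φ : (Fin n → ℕ) →+ G) (ψ1 : (Fin m1 → ℕ) →+ G) (ψ2 : (Fin m2 → ℕ) →+ G) (c : G) :
    SemilinearSet {v : Fin n → ℕ | ∃ (w1 : Fin m1 → ℕ) (w2 : Fin m2 → ℕ),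
      φ v + ψ1 w1 + ψ2 w2 = c} := by
  have key : {v : Fin n → ℕ | ∃ (w1 : Fin m1 → ℕ) (w2 : Fin m2 → ℕ), φ v + ψ1 w1 + ψ2 w2 = c}
      = {v | ∃ w : Fin (m1 + m2) → ℕ,
          φ v + (ψ1.comp (splitL m1 m2) + ψ2.comp (splitR m1 m2)) w = c} := by
    ext v
    simp only [Set.mem_setOf_eq, AddMonoidHom.add_apply, AddMonoidHom.coe_comp,
      Function.comp_apply]
    constructor
    · rintro ⟨w1, w2, hw⟩
      exact ⟨Fin.append w1 w2, by rw [splitL_append, splitR_append, ← add_assoc]; exact hw⟩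
    · rintro ⟨w, hw⟩
      exact ⟨splitL m1 m2 w, splitR m1 m2 w, by rw [add_assoc]; exact hw⟩
  rw [key]
  exact slack_semilinear _ _ c

/-- ℕ-linear combination with fixed vectors, as an additive hom. -/
def comb {m : ℕ} {G : Type*} [AddCommMonoid G] (z : Fin m → G) : (Fin m → ℕ) →+ G where
  toFun k := ∑ i, k i • z i
  map_zero' := by simp
  map_add' a b := by
    simp only [Pi.add_apply]
    rw [← Finset.sum_add_distrib]
    exact Finset.sum_congr rfl fun i _ => add_nsmul _ _ _

@[simp] lemma comb_apply {m : ℕ} {G : Type*} [AddCommMonoid G] (z : Fin m → G)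
    (k : Fin m → ℕ) : comb z k = ∑ i, k i • z i := rfl

/-- Coordinatewise cast ℕ → ℤ as an additive hom. -/
def natCastHom (n : ℕ) : (Fin n → ℕ) →+ (Fin n → ℤ) where
  toFun v := fun i => (v i : ℤ)
  map_zero' := by funext i; simp
  map_add' a b := by funext i; simp

@[simp] lemma natCastHom_apply (n : ℕ) (v : Fin n → ℕ) (i : Fin n) :
    natCastHom n v i = (v i : ℤ) := rfl

lemma natCastHom_injective (n : ℕ) : Function.Injective (natCastHom n) := by
  intro a b hab
  funext i
  have := congrFun hab i
  simpa using this

end Homs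


section Inter

lemma cast_linear_iff {n m : ℕ} (v x : Fin n → ℕ) (y : Fin m → (Fin n → ℕ)) (k : Fin m → ℕ) :
    (v = x + ∑ i, k i • y i) ↔
      natCastHom n v - ∑ i, k i • natCastHom n (y i) = natCastHom n x := by
  constructor
  · rintro rfl
    rw [map_add, map_sum]
    simp only [map_nsmul]
    abel
  · intro h
    apply natCastHom_injective n
    rw [map_add, map_sum]
    simp only [map_nsmul]
    rw [← h]
    abel

lemma comb_neg_apply {n m : ℕ} (y : Fin m → (Fin n → ℕ)) (k : Fin m → ℕ) :
    comb (fun i => -(natCastHom n (y i))) k = -∑ i, k i • natCastHom n (y i) := by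
  rw [comb_apply, ← Finset.sum_neg_distrib]
  exact Finset.sum_congr rfl fun i _ => smul_neg _ _

lemma linear_inter_semilinear {n : ℕ} {E F : Set (Fin n → ℕ)}
    (hE : LinearSet E) (hF : LinearSet F) : SemilinearSet (E ∩ F) := by
  obtain ⟨x1, m1, y1, rfl⟩ := hE
  obtain ⟨x2, m2, y2, rfl⟩ := hF
  have key := slack2_semilinear (G := (Fin n → ℤ) × (Fin n → ℤ))
    ((natCastHom n).prod (natCastHom n))
    (AddMonoidHom.prod (comb fun i => -(natCastHom n (y1 i))) 0)
    (AddMonoidHom.prod 0 (comb fun i => -(natCastHom n (y2 i))))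
    (natCastHom n x1, natCastHom n x2)
  have eq : {v : Fin n → ℕ | ∃ k : Fin m1 → ℕ, v = x1 + ∑ i, k i • y1 i}
      ∩ {v | ∃ k : Fin m2 → ℕ, v = x2 + ∑ i, k i • y2 i}
      = {v | ∃ (w1 : Fin m1 → ℕ) (w2 : Fin m2 → ℕ),
          ((natCastHom n).prod (natCastHom n)) v
            + (AddMonoidHom.prod (comb fun i => -(natCastHom n (y1 i))) 0) w1
            + (AddMonoidHom.prod 0 (comb fun i => -(natCastHom n (y2 i)))) w2
          = (natCastHom n x1, natCastHom n x2)} := by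
    ext v
    simp only [Set.mem_inter_iff, Set.mem_setOf_eq, AddMonoidHom.prod_apply,
      AddMonoidHom.zero_apply, Prod.mk_add_mk, Prod.mk.injEq, comb_neg_apply]
    constructor
    · rintro ⟨⟨k1, hk1⟩, ⟨k2, hk2⟩⟩
      rw [cast_linear_iff] at hk1 hk2
      exact ⟨k1, k2, by rw [← hk1, ← hk2]; constructor <;> abel⟩
    · rintro ⟨w1, w2, h1, h2⟩
      constructor
      · exact ⟨w1, by rw [cast_linear_iff, ← h1]; abel⟩
      · exact ⟨w2, by rw [cast_linear_iff, ← h2]; abel⟩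
  rw [eq]
  exact key

lemma semilinear_inter {n : ℕ} {E F : Set (Fin n → ℕ)}
    (hE : SemilinearSet E) (hF : SemilinearSet F) : SemilinearSet (E ∩ F) := by
  obtain ⟨a, L, hL, rfl⟩ := hE
  obtain ⟨b, K, hK, rfl⟩ := hF
  have : (⋃ i, L i) ∩ ⋃ i, K i = ⋃ p : Fin a × Fin b, (L p.1 ∩ K p.2) := by
    ext x
    simp only [Set.mem_inter_iff, Set.mem_iUnion, Prod.exists]
    tauto
  rw [this]
  exact semilinear_iUnion _ fun p => linear_inter_semilinear (hL p.1) (hK p.2)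

lemma linear_univ (n : ℕ) : LinearSet (Set.univ : Set (Fin n → ℕ)) := by
  refine ⟨0, n, fun i j => if i = j then 1 else 0, ?_⟩
  ext v
  simp only [Set.mem_univ, Set.mem_setOf_eq, true_iff]
  refine ⟨v, funext fun j => ?_⟩
  simp only [Pi.add_apply, Pi.zero_apply, Finset.sum_apply, Pi.smul_apply, smul_eq_mul,
    mul_ite, mul_one, mul_zero, zero_add]
  rw [Finset.sum_ite_eq' Finset.univ j v]
  simp

lemma semilinear_univ (n : ℕ) : SemilinearSet (Set.univ : Set (Fin n → ℕ)) :=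
  (linear_univ n).semilinear

lemma semilinear_iInter {n : ℕ} {ι : Type*} [Fintype ι] (f : ι → Set (Fin n → ℕ))
    (h : ∀ i, SemilinearSet (f i)) : SemilinearSet (⋂ i, f i) := by
  classical
  have : ⋂ i, f i = ⋂ i ∈ Finset.univ, f i := by simp
  rw [this]
  clear this
  induction (Finset.univ : Finset ι) using Finset.induction with
  | empty => simpa using semilinear_univ n
  | @insert a s ha ih =>
    rw [Finset.set_biInter_insert]
    exact semilinear_inter (h a) ih

end Inter


section Atoms

/-- Integer linear form on ℕ-vectors, as an additive hom. -/
def zform {n : ℕ} (a : Fin n → ℤ) : (Fin n → ℕ) →+ ℤ where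
  toFun M := ∑ i, a i * (M i : ℤ)
  map_zero' := by simp
  map_add' u v := by
    show (∑ i, a i * (((u i + v i : ℕ)) : ℤ))
        = (∑ i, a i * (u i : ℤ)) + ∑ i, a i * (v i : ℤ)
    rw [← Finset.sum_add_distrib]
    refine Finset.sum_congr rfl fun i _ => ?_
    push_cast
    ring

@[simp] lemma zform_apply {n : ℕ} (a : Fin n → ℤ) (M : Fin n → ℕ) :
    zform a M = ∑ i, a i * (M i : ℤ) := rfl

lemma semilinear_le {n : ℕ} (a : Fin n → ℤ) (c : ℤ) :
    SemilinearSet {M : Fin n → ℕ | ∑ i, a i * (M i : ℤ) ≤ c} := by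
  have key := slack_semilinear (zform a) (zform (n := 1) 1) c
  have eq : {M : Fin n → ℕ | ∑ i, a i * (M i : ℤ) ≤ c}
      = {M | ∃ w : Fin 1 → ℕ, zform a M + zform (n := 1) 1 w = c} := by
    ext M
    simp only [Set.mem_setOf_eq, zform_apply, Fin.sum_univ_one, Pi.one_apply, one_mul]
    constructor
    · intro h
      refine ⟨fun _ => (c - ∑ i, a i * (M i : ℤ)).toNat, ?_⟩
      rw [Int.toNat_of_nonneg (by omega)]
      ring
    · rintro ⟨w, hw⟩
      have h0 : (0 : ℤ) ≤ (w 0 : ℤ) := Int.natCast_nonneg _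
      omega
  rw [eq]
  exact key

lemma semilinear_ge {n : ℕ} (a : Fin n → ℤ) (c : ℤ) :
    SemilinearSet {M : Fin n → ℕ | c ≤ ∑ i, a i * (M i : ℤ)} := by
  have key := slack_semilinear (zform a) (zform (n := 1) (-1)) c
  have eq : {M : Fin n → ℕ | c ≤ ∑ i, a i * (M i : ℤ)}
      = {M | ∃ w : Fin 1 → ℕ, zform a M + zform (n := 1) (-1) w = c} := by
    ext M
    simp only [Set.mem_setOf_eq, zform_apply, Fin.sum_univ_one, Pi.neg_apply, Pi.one_apply,
      neg_one_mul]
    constructor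
    · intro h
      refine ⟨fun _ => ((∑ i, a i * (M i : ℤ)) - c).toNat, ?_⟩
      rw [Int.toNat_of_nonneg (by omega)]
      ring
    · rintro ⟨w, hw⟩
      have h0 : (0 : ℤ) ≤ (w 0 : ℤ) := Int.natCast_nonneg _
      omega
  rw [eq]
  exact key

lemma semilinear_mod {n : ℕ} (a : Fin n → ℤ) (c k : ℕ) :
    SemilinearSet {M : Fin n → ℕ | Int.ModEq (c : ℤ) (∑ i, a i * (M i : ℤ)) (k : ℤ)} := by
  have key := slack_semilinear (zform a) (zform (n := 2) ![-(c : ℤ), (c : ℤ)]) (k : ℤ)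
  have eq : {M : Fin n → ℕ | Int.ModEq (c : ℤ) (∑ i, a i * (M i : ℤ)) (k : ℤ)}
      = {M | ∃ w : Fin 2 → ℕ, zform a M + zform (n := 2) ![-(c : ℤ), (c : ℤ)] w = (k : ℤ)} := by
    ext M
    set S := ∑ i, a i * (M i : ℤ) with hS
    simp only [Set.mem_setOf_eq, zform_apply, Fin.sum_univ_two, Matrix.cons_val_zero,
      Matrix.cons_val_one, Matrix.head_cons, neg_mul]
    constructor
    · intro h
      obtain ⟨z, hz⟩ := (Int.modEq_iff_dvd.mp h)
      refine ⟨![(-z).toNat, z.toNat], ?_⟩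
      simp only [Matrix.cons_val_zero, Matrix.cons_val_one, Matrix.head_cons]
      have h1 : ((z.toNat : ℤ)) - (((-z).toNat : ℤ)) = z := by omega
      have h2 : (c : ℤ) * ((z.toNat : ℤ) - ((-z).toNat : ℤ)) = (k : ℤ) - S := by
        rw [h1, ← hz]
      rw [mul_sub] at h2
      linarith
    · rintro ⟨w, hw⟩
      rw [Int.modEq_iff_dvd]
      refine ⟨(w 1 : ℤ) - (w 0 : ℤ), ?_⟩
      rw [mul_sub]
      linarith
  rw [eq]
  exact key

end Atoms


section Petri

variable {n : ℕ} {T : Type}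

/-- markings from which firing `t` leads into `X`. -/
def preT (N : PetriNet (Fin n) T) (t : T) (X : Set (Fin n → ℕ)) : Set (Fin n → ℕ) :=
  {M | N.enabled t M ∧ (fun p => M p + N.post t p - N.pre p t) ∈ X}

lemma step_iff (N : PetriNet (Fin n) T) (M M' : Fin n → ℕ) :
    N.step M M' ↔ ∃ t, N.enabled t M ∧ M' = fun p => M p + N.post t p - N.pre p t := by
  constructor
  · rintro ⟨t, he, hf⟩; exact ⟨t, he, funext hf⟩
  · rintro ⟨t, he, rfl⟩; exact ⟨t, he, fun p => rfl⟩

lemma preT_linear (N : PetriNet (Fin n) T) (t : T) {E : Set (Fin n → ℕ)}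
    (hE : LinearSet E) : SemilinearSet (preT N t E) := by
  obtain ⟨x, m, y, rfl⟩ := hE
  set preV : Fin n → ℕ := fun p => N.pre p t with hpreV
  set postV : Fin n → ℕ := fun p => N.post t p with hpostV
  have key := slack2_semilinear (G := (Fin n → ℤ) × (Fin n → ℤ))
    ((natCastHom n).prod 0)
    ((-(natCastHom n)).prod (natCastHom n))
    (AddMonoidHom.prod 0 (comb fun i => -(natCastHom n (y i))))
    (natCastHom n preV, natCastHom n x - natCastHom n postV)
  have eq : preT N t {v | ∃ k : Fin m → ℕ, v = x + ∑ i, k i • y i}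
      = {M | ∃ (s : Fin n → ℕ) (k : Fin m → ℕ),
          ((natCastHom n).prod 0) M + ((-(natCastHom n)).prod (natCastHom n)) s
            + (AddMonoidHom.prod 0 (comb fun i => -(natCastHom n (y i)))) k
          = (natCastHom n preV, natCastHom n x - natCastHom n postV)} := by
    ext M
    simp only [preT, Set.mem_setOf_eq, AddMonoidHom.prod_apply, AddMonoidHom.zero_apply,
      AddMonoidHom.neg_apply, Prod.mk_add_mk, Prod.mk.injEq, comb_neg_apply,
      add_zero, zero_add]
    constructor
    · rintro ⟨he, k, hk⟩
      refine ⟨fun p => M p - N.pre p t, k, ?_, ?_⟩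
      · funext p
        have := he p
        simp only [Pi.add_apply, Pi.neg_apply, natCastHom_apply, hpreV]
        omega
      · have idB : natCastHom n (fun p => M p + N.post t p - N.pre p t)
            = natCastHom n (fun p => M p - N.pre p t) + natCastHom n postV := by
          funext p
          have := he p
          simp only [Pi.add_apply, natCastHom_apply, hpostV]
          omega
        have h2 := (cast_linear_iff _ x y k).mp hk
        rw [idB] at h2
        rw [← h2]
        abel
    · rintro ⟨s, k, h1, h2⟩
      have hM : ∀ p, M p = N.pre p t + s p := by
        intro p
        have := congrFun h1 p
        simp only [Pi.add_apply, Pi.neg_apply, natCastHom_apply, hpreV] at this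
        omega
      have he : N.enabled t M := fun p => by rw [hM p]; omega
      refine ⟨he, k, ?_⟩
      rw [cast_linear_iff]
      have idB : natCastHom n (fun p => M p + N.post t p - N.pre p t)
          = natCastHom n s + natCastHom n postV := by
        funext p
        have := hM p
        simp only [Pi.add_apply, natCastHom_apply, hpostV]
        omega
      rw [idB]
      have h3 := h2
      rw [eq_sub_iff_add_eq] at h3
      rw [← h3]
      abel
  rw [eq]
  exact key

lemma preT_semilinear (N : PetriNet (Fin n) T) (t : T) {X : Set (Fin n → ℕ)}
    (hX : SemilinearSet X) : SemilinearSet (preT N t X) := by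
  obtain ⟨m, L, hL, rfl⟩ := hX
  have eq : preT N t (⋃ i, L i) = ⋃ i, preT N t (L i) := by
    ext M
    simp only [preT, Set.mem_setOf_eq, Set.mem_iUnion]
    tauto
  rw [eq]
  exact semilinear_iUnion _ fun i => preT_linear N t (hL i)

lemma semilinear_notEnabled (N : PetriNet (Fin n) T) (t : T) :
    SemilinearSet {M : Fin n → ℕ | ¬ N.enabled t M} := by
  have eq : {M : Fin n → ℕ | ¬ N.enabled t M}
      = ⋃ p : Fin n, {M : Fin n → ℕ |
          ∑ i, (if i = p then (1 : ℤ) else 0) * (M i : ℤ) ≤ (N.pre p t : ℤ) - 1} := by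
    ext M
    simp only [Set.mem_setOf_eq, Set.mem_iUnion, PetriNet.enabled, not_forall, not_le]
    constructor
    · rintro ⟨p, hp⟩
      refine ⟨p, ?_⟩
      rw [Finset.sum_congr rfl (fun i _ => by rw [ite_mul, one_mul, zero_mul]),
        Finset.sum_ite_eq' Finset.univ p (fun i => (M i : ℤ))]
      simp only [Finset.mem_univ, if_true]
      omega
    · rintro ⟨p, hp⟩
      refine ⟨p, ?_⟩
      rw [Finset.sum_congr rfl (fun i _ => by rw [ite_mul, one_mul, zero_mul]),
        Finset.sum_ite_eq' Finset.univ p (fun i => (M i : ℤ))] at hp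
      simp only [Finset.mem_univ, if_true] at hp
      omega
  rw [eq]
  exact semilinear_iUnion _ fun p => semilinear_le _ _

end Petri


section Logic

lemma semilinear_not_mod {n : ℕ} (a : Fin n → ℤ) (c k : ℕ) :
    SemilinearSet {M : Fin n → ℕ | ¬ Int.ModEq (c : ℤ) (∑ i, a i * (M i : ℤ)) (k : ℤ)} := by
  classical
  rcases Nat.eq_zero_or_pos c with hc | hc
  · subst hc
    have eq : {M : Fin n → ℕ | ¬ Int.ModEq ((0 : ℕ) : ℤ) (∑ i, a i * (M i : ℤ)) (k : ℤ)}
        = {M : Fin n → ℕ | ∑ i, a i * (M i : ℤ) ≤ (k : ℤ) - 1}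
          ∪ {M : Fin n → ℕ | (k : ℤ) + 1 ≤ ∑ i, a i * (M i : ℤ)} := by
      ext M
      simp only [Set.mem_setOf_eq, Set.mem_union, Int.ModEq, Int.emod_zero, Nat.cast_zero]
      omega
    rw [eq]
    exact semilinear_union (semilinear_le a _) (semilinear_ge a _)
  · have f : ℕ → Set (Fin n → ℕ) :=
      fun j => {M : Fin n → ℕ | Int.ModEq (c : ℤ) (∑ i, a i * (M i : ℤ)) (j : ℤ)}
    have eq : {M : Fin n → ℕ | ¬ Int.ModEq (c : ℤ) (∑ i, a i * (M i : ℤ)) (k : ℤ)}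
        = ⋃ j ∈ (Finset.range c).filter (fun j : ℕ => ¬ Int.ModEq (c : ℤ) (j : ℤ) (k : ℤ)),
            (fun j : ℕ => {M : Fin n → ℕ | Int.ModEq (c : ℤ) (∑ i, a i * (M i : ℤ)) (j : ℤ)}) j := by
      ext M
      simp only [Set.mem_setOf_eq, Set.mem_iUnion, Finset.mem_filter, Finset.mem_range,
        exists_prop]
      generalize (∑ i, a i * (M i : ℤ)) = S
      constructor
      · intro h
        have hc' : (c : ℤ) ≠ 0 := by positivity
        have h1 : 0 ≤ S % (c : ℤ) := Int.emod_nonneg S hc'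
        have h2 : S % (c : ℤ) < (c : ℤ) := Int.emod_lt_of_pos S (by exact_mod_cast hc)
        have h3 : ((S % (c : ℤ)).toNat : ℤ) = S % (c : ℤ) := Int.toNat_of_nonneg h1
        refine ⟨(S % (c : ℤ)).toNat, ⟨?_, ?_⟩, ?_⟩
        · omega
        · intro hmod
          apply h
          have hSm : Int.ModEq (c : ℤ) S ((S % (c : ℤ)).toNat : ℤ) := by
            rw [Int.toNat_of_nonneg h1]
            exact (Int.emod_emod_of_dvd S dvd_rfl).symm
          exact hSm.trans hmod
        · rw [Int.toNat_of_nonneg h1]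
          exact (Int.emod_emod_of_dvd S dvd_rfl).symm
      · rintro ⟨j, ⟨hjc, hjk⟩, hj⟩
        intro hSk
        exact hjk ((hj.symm.trans hSk))
    rw [eq]
    exact semilinear_biUnion ((Finset.range c).filter fun j : ℕ => ¬ Int.ModEq (c : ℤ) (j : ℤ) (k : ℤ))
      (fun j => {M : Fin n → ℕ | Int.ModEq (c : ℤ) (∑ i, a i * (M i : ℤ)) (j : ℤ)})
      (fun j _ => semilinear_mod a c j)

lemma atom_pair {n : ℕ} (a : PAtom n) :
    SemilinearSet {M : Fin n → ℕ | PAtom.sat M a} ∧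
    SemilinearSet {M : Fin n → ℕ | ¬ PAtom.sat M a} := by
  induction a with
  | top =>
    constructor
    · have h : {M : Fin n → ℕ | PAtom.sat M .top} = Set.univ := by
        ext M; simp [PAtom.sat]
      rw [h]; exact semilinear_univ n
    · have h : {M : Fin n → ℕ | ¬ PAtom.sat M .top} = ∅ := by
        ext M; simp [PAtom.sat]
      rw [h]; exact semilinear_empty
  | le a k =>
    constructor
    · have h : {M : Fin n → ℕ | PAtom.sat M (.le a k)}
          = {M : Fin n → ℕ | ∑ i, a i * (M i : ℤ) ≤ k} := by
        ext M; simp [PAtom.sat]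
      rw [h]; exact semilinear_le a k
    · have h : {M : Fin n → ℕ | ¬ PAtom.sat M (.le a k)}
          = {M : Fin n → ℕ | k + 1 ≤ ∑ i, a i * (M i : ℤ)} := by
        ext M; simp only [Set.mem_setOf_eq, PAtom.sat, not_le]; omega
      rw [h]; exact semilinear_ge a (k + 1)
  | ge a k =>
    constructor
    · have h : {M : Fin n → ℕ | PAtom.sat M (.ge a k)}
          = {M : Fin n → ℕ | k ≤ ∑ i, a i * (M i : ℤ)} := by
        ext M; simp [PAtom.sat]
      rw [h]; exact semilinear_ge a k
    · have h : {M : Fin n → ℕ | ¬ PAtom.sat M (.ge a k)}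
          = {M : Fin n → ℕ | ∑ i, a i * (M i : ℤ) ≤ k - 1} := by
        ext M; simp only [Set.mem_setOf_eq, PAtom.sat, not_le]; omega
      rw [h]; exact semilinear_le a (k - 1)
  | mod a c k =>
    constructor
    · have h : {M : Fin n → ℕ | PAtom.sat M (.mod a c k)}
          = {M : Fin n → ℕ | Int.ModEq (c : ℤ) (∑ i, a i * (M i : ℤ)) (k : ℤ)} := by
        ext M; simp [PAtom.sat]
      rw [h]; exact semilinear_mod a c k
    · have h : {M : Fin n → ℕ | ¬ PAtom.sat M (.mod a c k)}
          = {M : Fin n → ℕ | ¬ Int.ModEq (c : ℤ) (∑ i, a i * (M i : ℤ)) (k : ℤ)} := by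
        ext M; simp [PAtom.sat]
      rw [h]; exact semilinear_not_mod a c k
  | and p q ihp ihq =>
    constructor
    · have h : {M : Fin n → ℕ | PAtom.sat M (p.and q)}
          = {M : Fin n → ℕ | PAtom.sat M p} ∩ {M : Fin n → ℕ | PAtom.sat M q} := by
        ext M; simp [PAtom.sat]
      rw [h]; exact semilinear_inter ihp.1 ihq.1
    · have h : {M : Fin n → ℕ | ¬ PAtom.sat M (p.and q)}
          = {M : Fin n → ℕ | ¬ PAtom.sat M p} ∪ {M : Fin n → ℕ | ¬ PAtom.sat M q} := by
        ext M; simp [PAtom.sat]; tauto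
      rw [h]; exact semilinear_union ihp.2 ihq.2
  | neg p ihp =>
    constructor
    · have h : {M : Fin n → ℕ | PAtom.sat M p.neg} = {M : Fin n → ℕ | ¬ PAtom.sat M p} := by
        ext M; simp [PAtom.sat]
      rw [h]; exact ihp.2
    · have h : {M : Fin n → ℕ | ¬ PAtom.sat M p.neg} = {M : Fin n → ℕ | PAtom.sat M p} := by
        ext M; simp [PAtom.sat]
      rw [h]; exact ihp.1

variable {n : ℕ} {T : Type}

lemma boxSet_eq (N : PetriNet (Fin n) T) (X : Set (Fin n → ℕ)) :
    {M : Fin n → ℕ | ∀ M', N.step M M' → M' ∈ X}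
      = ⋂ t, ({M : Fin n → ℕ | ¬ N.enabled t M} ∪ preT N t X) := by
  ext M
  simp only [Set.mem_setOf_eq, Set.mem_iInter, Set.mem_union, preT]
  constructor
  · intro h t
    by_cases he : N.enabled t M
    · exact Or.inr ⟨he, h _ ((step_iff N M _).mpr ⟨t, he, rfl⟩)⟩
    · exact Or.inl he
  · intro h M' hst
    rw [step_iff] at hst
    obtain ⟨t, he, rfl⟩ := hst
    rcases h t with hne | ⟨_, hx⟩
    · exact absurd he hne
    · exact hx

lemma diaSet_eq (N : PetriNet (Fin n) T) (X : Set (Fin n → ℕ)) :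
    {M : Fin n → ℕ | ∃ M', N.step M M' ∧ M' ∈ X} = ⋃ t, preT N t X := by
  ext M
  simp only [Set.mem_setOf_eq, Set.mem_iUnion, preT]
  constructor
  · rintro ⟨M', hst, hx⟩
    rw [step_iff] at hst
    obtain ⟨t, he, rfl⟩ := hst
    exact ⟨t, he, hx⟩
  · rintro ⟨t, he, hx⟩
    exact ⟨_, (step_iff N M _).mpr ⟨t, he, rfl⟩, hx⟩

lemma paml_pair [Fintype T] (N : PetriNet (Fin n) T) (φ : PAML n) :
    SemilinearSet {M : Fin n → ℕ | PAML.sat N M φ} ∧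
    SemilinearSet {M : Fin n → ℕ | ¬ PAML.sat N M φ} := by
  induction φ with
  | atom a =>
    constructor
    · have h : {M : Fin n → ℕ | PAML.sat N M (.atom a)} = {M : Fin n → ℕ | PAtom.sat M a} := by
        ext M; simp [PAML.sat]
      rw [h]; exact (atom_pair a).1
    · have h : {M : Fin n → ℕ | ¬ PAML.sat N M (.atom a)}
          = {M : Fin n → ℕ | ¬ PAtom.sat M a} := by
        ext M; simp [PAML.sat]
      rw [h]; exact (atom_pair a).2
  | neg ψ ih =>
    constructor
    · have h : {M : Fin n → ℕ | PAML.sat N M ψ.neg} = {M : Fin n → ℕ | ¬ PAML.sat N M ψ} := by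
        ext M; simp [PAML.sat]
      rw [h]; exact ih.2
    · have h : {M : Fin n → ℕ | ¬ PAML.sat N M ψ.neg} = {M : Fin n → ℕ | PAML.sat N M ψ} := by
        ext M; simp [PAML.sat]
      rw [h]; exact ih.1
  | and p q ihp ihq =>
    constructor
    · have h : {M : Fin n → ℕ | PAML.sat N M (p.and q)}
          = {M : Fin n → ℕ | PAML.sat N M p} ∩ {M : Fin n → ℕ | PAML.sat N M q} := by
        ext M; simp [PAML.sat]
      rw [h]; exact semilinear_inter ihp.1 ihq.1
    · have h : {M : Fin n → ℕ | ¬ PAML.sat N M (p.and q)}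
          = {M : Fin n → ℕ | ¬ PAML.sat N M p} ∪ {M : Fin n → ℕ | ¬ PAML.sat N M q} := by
        ext M; simp [PAML.sat]; tauto
      rw [h]; exact semilinear_union ihp.2 ihq.2
  | box ψ ih =>
    constructor
    · have h : {M : Fin n → ℕ | PAML.sat N M ψ.box}
          = {M : Fin n → ℕ | ∀ M', N.step M M' → M' ∈ {M' : Fin n → ℕ | PAML.sat N M' ψ}} := by
        ext M; simp [PAML.sat]
      rw [h, boxSet_eq]
      exact semilinear_iInter _ fun t =>
        semilinear_union (semilinear_notEnabled N t) (preT_semilinear N t ih.1)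
    · have h : {M : Fin n → ℕ | ¬ PAML.sat N M ψ.box}
          = {M : Fin n → ℕ | ∃ M', N.step M M' ∧ M' ∈ {M' : Fin n → ℕ | ¬ PAML.sat N M' ψ}} := by
        ext M
        simp only [Set.mem_setOf_eq, PAML.sat]
        push_neg
        tauto
      rw [h, diaSet_eq]
      exact semilinear_iUnion _ fun t => preT_semilinear N t ih.2
  | dia ψ ih =>
    constructor
    · have h : {M : Fin n → ℕ | PAML.sat N M ψ.dia}
          = {M : Fin n → ℕ | ∃ M', N.step M M' ∧ M' ∈ {M' : Fin n → ℕ | PAML.sat N M' ψ}} := by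
        ext M; simp [PAML.sat]
      rw [h, diaSet_eq]
      exact semilinear_iUnion _ fun t => preT_semilinear N t ih.1
    · have h : {M : Fin n → ℕ | ¬ PAML.sat N M ψ.dia}
          = {M : Fin n → ℕ | ∀ M', N.step M M' → M' ∈ {M' : Fin n → ℕ | ¬ PAML.sat N M' ψ}} := by
        ext M
        simp only [Set.mem_setOf_eq, PAML.sat]
        push_neg
        tauto
      rw [h, boxSet_eq]
      exact semilinear_iInter _ fun t =>
        semilinear_union (semilinear_notEnabled N t) (preT_semilinear N t ih.2)

end Logic


/-- For a Petri net with n places (finitely many transitions), Presburger atoms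
define semilinear sets, the satisfaction sets of □ψ and ◇ψ are given by the
pre operator, and consequently the set of markings satisfying any formula of
PAML(□) in the unlabelled transition graph is semilinear. -/
theorem paml_satisfaction_semilinear (n : ℕ) {T : Type} [Fintype T]
    (N : PetriNet (Fin n) T) :
    (∀ a : PAtom n, SemilinearSet {M : Fin n → ℕ | PAtom.sat M a}) ∧
    (∀ ψ : PAML n, {M : Fin n → ℕ | PAML.sat N M (.box ψ)} =
        Set.univ \ preSet N (Set.univ \ {M : Fin n → ℕ | PAML.sat N M ψ})) ∧
    (∀ ψ : PAML n, {M : Fin n → ℕ | PAML.sat N M (.dia ψ)} =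
        preSet N {M : Fin n → ℕ | PAML.sat N M ψ}) ∧
    (∀ φ ψ : PAML n, {M : Fin n → ℕ | PAML.sat N M (.and φ ψ)} =
        {M : Fin n → ℕ | PAML.sat N M φ} ∩ {M : Fin n → ℕ | PAML.sat N M ψ}) ∧
    (∀ φ : PAML n, {M : Fin n → ℕ | PAML.sat N M (.neg φ)} =
        Set.univ \ {M : Fin n → ℕ | PAML.sat N M φ}) ∧
    (∀ φ : PAML n, SemilinearSet {M : Fin n → ℕ | PAML.sat N M φ}) := by
  refine ⟨fun a => (atom_pair a).1, ?_, ?_, ?_, ?_, fun φ => (paml_pair N φ).1⟩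
  · intro ψ
    ext M
    constructor
    · intro hM
      simp only [Set.mem_setOf_eq, PAML.sat] at hM
      refine ⟨trivial, ?_⟩
      rintro ⟨M', hM', hst⟩
      exact hM'.2 (hM M' hst)
    · rintro ⟨-, hM⟩
      simp only [Set.mem_setOf_eq, PAML.sat]
      intro M' hst
      by_contra hns
      exact hM ⟨M', ⟨trivial, hns⟩, hst⟩
  · intro ψ
    ext M
    simp only [Set.mem_setOf_eq, PAML.sat, preSet]
    constructor
    · rintro ⟨M', hst, hs⟩; exact ⟨M', hs, hst⟩
    · rintro ⟨M', hs, hst⟩; exact ⟨M', hst, hs⟩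
  · intro φ ψ
    ext M
    simp [PAML.sat]
  · intro φ
    ext M
    simp [PAML.sat]
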